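/- The set of vertices still unconnected after steps 1–3 of the connection procedure forms an independent set in the forest H (no two of them are adjacent in H). -/
import Mathlib


section
variable {V : Type*} (par : V → Option V) (col : V → Fin 3)

/-- Step 1: every vertex of color 1 (here color `0`) that has a parent chooses
its parent. -/
def S1 : Set V := {v | col v = 0 ∧ ∃ u, par v = some u}

/-- Vertices marked "connected" after step 1: the choosers and the chosen
parents. -/
def C1 : Set V := S1 par col ∪ {u | ∃ v ∈ S1 par col, par v = some u}

/-- Step 2: every vertex of color 2 (here color `1`) that is not yet connected
and whose parent is not yet connected chooses its parent. -/
def S2 : Set V := {v | col v = 1 ∧ v ∉ C1 par col ∧ ∃ u, par v = some u ∧ u ∉ C1 par col}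

/-- Vertices marked "connected" after step 2. -/
def C2 : Set V := C1 par col ∪ S2 par col ∪ {u | ∃ v ∈ S2 par col, par v = some u}

/-- Step 3: likewise for color 3 (here color `2`). -/
def S3 : Set V := {v | col v = 2 ∧ v ∉ C2 par col ∧ ∃ u, par v = some u ∧ u ∉ C2 par col}

/-- Vertices marked "connected" after step 3. -/
def C3 : Set V := C2 par col ∪ S3 par col ∪ {u | ∃ v ∈ S3 par col, par v = some u}

/-- Step 4: every vertex still unconnected after steps 1–3 that has a parent
chooses its parent. -/
def S4 : Set V := {v | v ∉ C3 par col ∧ ∃ u, par v = some u}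

/-- The edge from `v` to its parent `u` is chosen during steps 1–3. -/
def chosen13 (v u : V) : Prop :=
  par v = some u ∧ v ∈ S1 par col ∪ S2 par col ∪ S3 par col

/-- The edge from `v` to its parent `u` is chosen during the whole procedure
(steps 1–4). -/
def chosen (v u : V) : Prop :=
  par v = some u ∧ v ∈ S1 par col ∪ S2 par col ∪ S3 par col ∪ S4 par col

end

/-- The set of vertices still unconnected after steps 1–3 of the connection
procedure on a properly 3-colored rooted forest `H` is an independent set in
`H`: no two unconnected vertices are adjacent (in particular, neither is the
parent of the other). -/
theorem stmt_13 {V : Type*} (par : V → Option V) (col : V → Fin 3)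
    (hproper : ∀ v u, par v = some u → col v ≠ col u) :
    ∀ v u : V, v ∉ C3 par col → u ∉ C3 par col → par v ≠ some u := by
  intro v u hv hu hpar
  have hvC1 : v ∉ C1 par col := fun h => hv (Or.inl (Or.inl (Or.inl (Or.inl h))))
  have huC1 : u ∉ C1 par col := fun h => hu (Or.inl (Or.inl (Or.inl (Or.inl h))))
  have hvC2 : v ∉ C2 par col := fun h => hv (Or.inl (Or.inl h))
  have huC2 : u ∉ C2 par col := fun h => hu (Or.inl (Or.inl h))
  have h : col v = 0 ∨ col v = 1 ∨ col v = 2 := by omega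
  rcases h with h | h | h
  · exact hvC1 (Or.inl ⟨h, u, hpar⟩)
  · exact hvC2 (Or.inl (Or.inr ⟨h, hvC1, u, hpar, huC1⟩))
  · exact hv (Or.inl (Or.inr ⟨h, hvC2, u, hpar, huC2⟩))
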